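/- (Invariance under β-reduction) For all simply typed terms t, u with Γ, x:ω ⊢ t : ω' and Γ ⊢ u : ω, and every environment γ for Γ, [[(λx.t)u]]_γ = [[t[u/x]]]_γ. -/

import Mathlib

universe u

/-- An interaction system on a set of states `S`. -/
structure IS (S : Type u) where
  A : S → Type u
  D : (s : S) → A s → Type u
  n : (s : S) → (a : A s) → D s a → S

/-- `r` is a simulation from `w₁` to `w₂`. -/
def IsSim {S₁ S₂ : Type u} (w₁ : IS S₁) (w₂ : IS S₂) (r : S₁ → S₂ → Prop) : Prop :=
  ∀ s₁ s₂, r s₁ s₂ → ∀ a₁ : w₁.A s₁, ∃ a₂ : w₂.A s₂,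
    ∀ d₂ : w₂.D s₂ a₂, ∃ d₁ : w₁.D s₁ a₁, r (w₁.n s₁ a₁ d₁) (w₂.n s₂ a₂ d₂)

/-- Relational composition: `(relComp r₂ r₁) s₁ s₃ ↔ ∃ s₂, r₁ s₁ s₂ ∧ r₂ s₂ s₃`. -/
def relComp {S₁ S₂ S₃ : Type u} (r₂ : S₂ → S₃ → Prop) (r₁ : S₁ → S₂ → Prop) :
    S₁ → S₃ → Prop :=
  fun s₁ s₃ => ∃ s₂, r₁ s₁ s₂ ∧ r₂ s₂ s₃

/-- Synchronous product of interaction systems. -/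
def tensor {S₁ S₂ : Type u} (w₁ : IS S₁) (w₂ : IS S₂) : IS (S₁ × S₂) where
  A s := w₁.A s.1 × w₂.A s.2
  D s a := w₁.D s.1 a.1 × w₂.D s.2 a.2
  n s a d := (w₁.n s.1 a.1 d.1, w₂.n s.2 a.2 d.2)

/-- The unit interaction system `1` on a singleton state space. -/
def unitIS : IS PUnit.{u+1} where
  A _ := PUnit
  D _ _ := PUnit
  n _ _ _ := ⟨⟩

/-- The linear arrow `w₂ ⊸ w₃`. -/
def lolli {S₂ S₃ : Type u} (w₂ : IS S₂) (w₃ : IS S₃) : IS (S₂ × S₃) where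
  A s := Σ f : w₂.A s.1 → w₃.A s.2, ∀ a₂ : w₂.A s.1, w₃.D s.2 (f a₂) → w₂.D s.1 a₂
  D s a := Σ a₂ : w₂.A s.1, w₃.D s.2 (a.1 a₂)
  n s a d := (w₂.n s.1 d.1 (a.2 d.1 d.2), w₃.n s.2 (a.1 d.1) d.2)

/-- Lists of actions for a list of states (multithreading). -/
def listA {S : Type u} (w : IS S) : List S → Type u
  | [] => PUnit
  | s :: l => w.A s × listA w l

/-- Lists of reactions to a list of actions. -/
def listD {S : Type u} (w : IS S) : (l : List S) → listA w l → Type u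
  | [], _ => PUnit
  | _ :: l, a => w.D _ a.1 × listD w l a.2

/-- Componentwise next states. -/
def listN {S : Type u} (w : IS S) : (l : List S) → (a : listA w l) → listD w l a → List S
  | [], _, _ => []
  | s :: l, a, d => w.n s a.1 d.1 :: listN w l a.2 d.2

/-- The exponential `!w`, on finite multisets of states. -/
def bang {S : Type u} (w : IS S) : IS (Multiset S) where
  A μ := Σ' (l : List S) (_ : (↑l : Multiset S) = μ), listA w l
  D _ a := listD w a.1 a.2.2
  n _ a d := ↑(listN w a.1 a.2.2 d)

/-- Pointwise lifting of a relation to finite multisets. -/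
def bangRel {S₁ S₂ : Type u} (r : S₁ → S₂ → Prop) :
    Multiset S₁ → Multiset S₂ → Prop :=
  fun μ₁ μ₂ => ∃ (l₁ : List S₁) (l₂ : List S₂), (↑l₁ : Multiset S₁) = μ₁ ∧ (↑l₂ : Multiset S₂) = μ₂ ∧
    List.Forall₂ r l₁ l₂

/-- Simple types over base type variables. -/
inductive Ty : Type
  | base : ℕ → Ty
  | arrow : Ty → Ty → Ty

/-- Typed variables in a context. -/
inductive Var : List Ty → Ty → Type
  | vz {Γ ω} : Var (ω :: Γ) ω
  | vs {Γ ω ω'} : Var Γ ω → Var (ω' :: Γ) ω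

/-- Intrinsically typed λ-terms. -/
inductive Tm : List Ty → Ty → Type
  | var {Γ ω} : Var Γ ω → Tm Γ ω
  | app {Γ ω ω'} : Tm Γ (.arrow ω ω') → Tm Γ ω → Tm Γ ω'
  | lam {Γ ω ω'} : Tm (ω :: Γ) ω' → Tm Γ (.arrow ω ω')

variable (ρ : ℕ → Type) (wρ : ∀ i, IS (ρ i))

/-- `|ω|`: the set of states of the interpretation of type `ω`. -/
def St : Ty → Type
  | .base i => ρ i
  | .arrow ω ω' => Multiset (St ω) × St ω'

/-- Interpretation of types: `X* = ρ(X)`, `(ω → ω')* = !ω* ⊸ ω'*`. -/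
def tyIS : (ω : Ty) → IS (St ρ ω)
  | .base i => wρ i
  | .arrow ω ω' => lolli (bang (tyIS ω)) (tyIS ω')

/-- Environments for a context: a finite multiset of states for each variable. -/
def Env : List Ty → Type
  | [] => PUnit
  | ω :: Γ => Multiset (St ρ ω) × Env Γ

/-- The empty environment. -/
def Env.zero : (Γ : List Ty) → Env ρ Γ
  | [] => ⟨⟩
  | _ :: Γ => (0, Env.zero Γ)

/-- Pointwise sum of environments. -/
def Env.add : {Γ : List Ty} → Env ρ Γ → Env ρ Γ → Env ρ Γ
  | [], _, _ => ⟨⟩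
  | _ :: _, γ, δ => (γ.1 + δ.1, Env.add γ.2 δ.2)

/-- Sum of a list of environments. -/
def envSum {Γ : List Ty} (L : List (Env ρ Γ)) : Env ρ Γ :=
  L.foldr (Env.add ρ) (Env.zero ρ Γ)

/-- The environment assigning the singleton multiset `[s]` to the variable `v`
and the empty multiset to every other variable. -/
def oneAt : {Γ : List Ty} → {ω : Ty} → Var Γ ω → St ρ ω → Env ρ Γ
  | _, _, .vz, s => ({s}, Env.zero ρ _)
  | _, _, .vs v, s => (0, oneAt v s)

/-- The interpretation `!Γ = !ω₁* ⊗ ⋯ ⊗ !ωₙ*` of a context. -/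
def ctxIS : (Γ : List Ty) → IS (Env ρ Γ)
  | [] => unitIS
  | ω :: Γ => tensor (bang (tyIS ρ wρ ω)) (ctxIS Γ)

/-- The relational interpretation of terms. -/
def interp : {Γ : List Ty} → {ω : Ty} → Tm Γ ω → Env ρ Γ → Set (St ρ ω)
  | _, _, .var v, γ => {s | γ = oneAt ρ v s}
  | _, _, .app t u, γ => {s | ∃ (γ₀ : Env ρ _) (L : List (Env ρ _ × St ρ _)),
      (∀ p ∈ L, p.2 ∈ interp u p.1) ∧
      γ = Env.add ρ γ₀ (envSum ρ (L.map Prod.fst)) ∧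
      ((↑(L.map Prod.snd) : Multiset _), s) ∈ interp t γ₀}
  | _, _, .lam t, γ => {p | p.2 ∈ interp t (p.1, γ)}
/-- Renamings between contexts. -/
def Ren (Γ Δ : List Ty) := ∀ ω, Var Γ ω → Var Δ ω

def Ren.lift {Γ Δ : List Ty} {ω₀ : Ty} (r : Ren Γ Δ) : Ren (ω₀ :: Γ) (ω₀ :: Δ) :=
  fun _ v =>
    match v with
    | .vz => .vz
    | .vs v => .vs (r _ v)

def Tm.rename : {Γ Δ : List Ty} → Ren Γ Δ → {ω : Ty} → Tm Γ ω → Tm Δ ω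
  | _, _, r, _, .var v => .var (r _ v)
  | _, _, r, _, .app t u => .app (t.rename r) (u.rename r)
  | _, _, r, _, .lam t => .lam (t.rename (Ren.lift r))

/-- Substitutions between contexts. -/
def Subst (Γ Δ : List Ty) := ∀ ω, Var Γ ω → Tm Δ ω

def Subst.lift {Γ Δ : List Ty} {ω₀ : Ty} (σ : Subst Γ Δ) : Subst (ω₀ :: Γ) (ω₀ :: Δ) :=
  fun _ v =>
    match v with
    | .vz => .var .vz
    | .vs v => (σ _ v).rename (fun _ => .vs)

def Tm.subst : {Γ Δ : List Ty} → Subst Γ Δ → {ω : Ty} → Tm Γ ω → Tm Δ ω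
  | _, _, σ, _, .var v => σ _ v
  | _, _, σ, _, .app t u => .app (t.subst σ) (u.subst σ)
  | _, _, σ, _, .lam t => .lam (t.subst (Subst.lift σ))

def Subst.cons {Γ : List Ty} {ω₀ : Ty} (u : Tm Γ ω₀) : Subst (ω₀ :: Γ) Γ :=
  fun ω v =>
    match ω, v with
    | _, .vz => u
    | _, .vs v => .var v

/-- Capture-avoiding substitution of `u` for the first variable of `t`. -/
def subst1 {Γ : List Ty} {ω ω' : Ty} (t : Tm (ω :: Γ) ω') (u : Tm Γ ω) : Tm Γ ω' :=
  t.subst (Subst.cons u)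

namespace BetaAux

instance envACM (ρ : ℕ → Type) : (Γ : List Ty) → AddCommMonoid (Env ρ Γ)
  | [] => inferInstanceAs (AddCommMonoid PUnit)
  | ω :: Γ => letI := envACM ρ Γ; inferInstanceAs (AddCommMonoid (Multiset (St ρ ω) × Env ρ Γ))

variable {ρ : ℕ → Type}

theorem env_add_cons {ω Γ} (a b : Env ρ (ω :: Γ)) :
    a + b = (a.1 + b.1, a.2 + b.2) := rfl

theorem env_zero_cons {ω Γ} : (0 : Env ρ (ω :: Γ)) = (0, 0) := rfl

theorem add_eq : {Γ : List Ty} → (a b : Env ρ Γ) → Env.add ρ a b = a + b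
  | [], _, _ => rfl
  | ω :: Γ, a, b => by
    show (a.1 + b.1, Env.add ρ a.2 b.2) = _
    rw [add_eq a.2 b.2, env_add_cons]

theorem zero_eq : {Γ : List Ty} → Env.zero ρ Γ = 0
  | [] => rfl
  | ω :: Γ => by
    show ((0 : Multiset (St ρ ω)), Env.zero ρ Γ) = _
    rw [zero_eq, env_zero_cons]

theorem envSum_eq {Γ : List Ty} (L : List (Env ρ Γ)) : envSum ρ L = L.sum := by
  induction L with
  | nil => simpa [envSum] using zero_eq
  | cons a L ih =>
    simp only [envSum, List.foldr_cons, List.sum_cons] at *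
    rw [add_eq, ih]

variable {ρ : ℕ → Type}

/-- Pushforward of an environment along a renaming. -/
def renEnv : {Γ Δ : List Ty} → Ren Γ Δ → Env ρ Γ → Env ρ Δ
  | [], _, _, _ => 0
  | _ :: _, _, r, δ =>
    (δ.1.map (fun s => oneAt ρ (r _ .vz) s)).sum + renEnv (fun _ v => r _ (.vs v)) δ.2

theorem oneAt_vz {ω Γ} (s : St ρ ω) :
    oneAt ρ (.vz : Var (ω :: Γ) ω) s = (({s} : Multiset _), 0) := by
  show (({s} : Multiset _), Env.zero ρ Γ) = _
  rw [zero_eq]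

theorem oneAt_vs {ω ω' Γ} (v : Var Γ ω) (s : St ρ ω) :
    oneAt ρ (.vs v : Var (ω' :: Γ) ω) s = ((0 : Multiset _), oneAt ρ v s) := rfl

theorem sum_map_pair {α : Type} {β γ : Type} [AddCommMonoid β] [AddCommMonoid γ]
    (μ : Multiset α) (f : α → β) (g : α → γ) :
    (μ.map (fun s => ((f s, g s) : β × γ))).sum = ((μ.map f).sum, (μ.map g).sum) := by
  induction μ using Multiset.induction with
  | empty => simp; rfl
  | cons a μ ih => simp [ih, Prod.ext_iff]

theorem manyAt_vz {ω Γ} (μ : Multiset (St ρ ω)) :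
    ((μ.map (fun s => oneAt ρ (.vz : Var (ω :: Γ) ω) s)).sum : Env ρ (ω :: Γ)) = (μ, 0) := by
  rw [show (fun s => oneAt ρ (.vz : Var (ω :: Γ) ω) s)
      = (fun s => ((({s} : Multiset _), (0 : Env ρ Γ)) : Env ρ (ω :: Γ))) from funext oneAt_vz]
  erw [sum_map_pair]
  congr 1
  · induction μ using Multiset.induction with
    | empty => rfl
    | cons a μ ih => rw [Multiset.map_cons, Multiset.sum_cons, ih, Multiset.singleton_add]
  · rw [Multiset.map_const', Multiset.sum_replicate, smul_zero]

theorem manyAt_vs {ω ω' Γ} (v : Var Γ ω) (μ : Multiset (St ρ ω)) :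
    ((μ.map (fun s => oneAt ρ (.vs v : Var (ω' :: Γ) ω) s)).sum : Env ρ (ω' :: Γ)) =
      ((0 : Multiset _), (μ.map (fun s => oneAt ρ v s)).sum) := by
  simp only [oneAt_vs]
  erw [sum_map_pair]
  simp
  rfl

theorem renEnv_zero : {Γ Δ : List Ty} → (r : Ren Γ Δ) → renEnv (ρ := ρ) r 0 = 0
  | [], _, _ => rfl
  | ω :: Γ, Δ, r => by
    show (((0 : Env ρ (ω :: Γ)).1.map _).sum + renEnv (fun _ v => r _ (.vs v))
      (0 : Env ρ (ω :: Γ)).2 : Env ρ Δ) = 0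
    have h1 : (0 : Env ρ (ω :: Γ)).1 = 0 := rfl
    have h2 : (0 : Env ρ (ω :: Γ)).2 = 0 := rfl
    rw [h1, h2, Multiset.map_zero, Multiset.sum_zero, zero_add,
      renEnv_zero (fun _ v => r _ (.vs v))]

theorem renEnv_add : {Γ Δ : List Ty} → (r : Ren Γ Δ) → (a b : Env ρ Γ) →
    renEnv r (a + b) = renEnv r a + renEnv r b
  | [], Δ, _, _, _ => by
    show (0 : Env ρ Δ) = 0 + 0
    rw [add_zero]
  | ω :: Γ, Δ, r, a, b => by
    show (((a + b).1.map _).sum + renEnv _ (a + b).2 : Env ρ Δ) = _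
    rw [env_add_cons]
    show ((a.1 + b.1).map _).sum + renEnv _ (a.2 + b.2) = _
    rw [Multiset.map_add, Multiset.sum_add, renEnv_add (fun _ v => r _ (.vs v)) a.2 b.2]
    show _ = (a.1.map _).sum + renEnv _ a.2 + ((b.1.map _).sum + renEnv _ b.2)
    abel

theorem renEnv_listSum {Γ Δ : List Ty} (r : Ren Γ Δ) (L : List (Env ρ Γ)) :
    renEnv r L.sum = (L.map (renEnv r)).sum := by
  induction L with
  | nil => simp [renEnv_zero]
  | cons a L ih => simp [renEnv_add, ih]

theorem renEnv_oneAt : {Γ Δ : List Ty} → {ω : Ty} → (r : Ren Γ Δ) → (v : Var Γ ω) →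
    (s : St ρ ω) → renEnv r (oneAt ρ v s) = oneAt ρ (r _ v) s
  | _, Δ, ω, r, .vz, s => by
    show ((oneAt ρ (.vz) s).1.map _).sum + renEnv _ (oneAt ρ .vz s).2 = _
    rw [oneAt_vz]
    show (({s} : Multiset _).map _).sum + renEnv _ (0 : Env ρ _) = _
    erw [renEnv_zero]
    simp [renEnv_zero]
  | _, Δ, ω, r, .vs v, s => by
    show ((oneAt ρ (.vs v) s).1.map _).sum + renEnv _ (oneAt ρ (.vs v) s).2 = _
    rw [oneAt_vs]
    show ((0 : Multiset _).map _).sum + renEnv _ (oneAt ρ v s) = _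
    rw [renEnv_oneAt (fun _ w => r _ (.vs w)) v s]
    simp

theorem renEnv_vs {ω' Γ Δ} (r : Ren Γ Δ) (δ : Env ρ Γ) :
    renEnv (fun _ v => (.vs (r _ v) : Var (ω' :: Δ) _)) δ = ((0 : Multiset _), renEnv r δ) := by
  induction Γ with
  | nil =>
    show (0 : Env ρ (ω' :: Δ)) = _
    rw [env_zero_cons]
    rfl
  | cons ω Γ ih =>
    show (δ.1.map (fun s => oneAt ρ (.vs (r _ .vz)) s)).sum + _ = _
    erw [manyAt_vs, ih (fun _ v => r _ (.vs v)) δ.2, env_add_cons]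
    show ((0 + 0 : Multiset _), _ + _) = _
    rw [zero_add]
    rfl

theorem renEnv_id : {Γ : List Ty} → (δ : Env ρ Γ) → renEnv (fun _ v => v) δ = δ
  | [], _ => rfl
  | ω :: Γ, δ => by
    show (δ.1.map (fun s => oneAt ρ .vz s)).sum + renEnv (fun _ v => .vs v) δ.2 = δ
    rw [manyAt_vz]
    erw [renEnv_vs (fun _ v => v) δ.2, renEnv_id δ.2, env_add_cons]
    show ((δ.1 + 0 : Multiset _), 0 + δ.2) = δ
    rw [add_zero, zero_add]
    exact Prod.mk.eta

theorem renEnv_lift {ω₀ Γ Δ} (r : Ren Γ Δ) (ν : Multiset (St ρ ω₀)) (δ : Env ρ Γ) :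
    renEnv (Ren.lift r) ((ν, δ) : Env ρ (ω₀ :: Γ)) = ((ν, renEnv r δ) : Env ρ (ω₀ :: Δ)) := by
  show (ν.map (fun s => oneAt ρ (Ren.lift r _ .vz) s)).sum +
    renEnv (fun _ v => Ren.lift r _ (.vs v)) δ = _
  have h1 : (Ren.lift r _ (.vz : Var (ω₀ :: Γ) ω₀)) = (.vz : Var (ω₀ :: Δ) ω₀) := rfl
  have h2 : (fun (ω : Ty) (v : Var Γ ω) => Ren.lift r _ (.vs v)) =
      (fun ω v => (.vs (r ω v) : Var (ω₀ :: Δ) ω)) := rfl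
  erw [h1, h2, manyAt_vz, renEnv_vs, env_add_cons]
  show ((ν + 0 : Multiset _), 0 + renEnv r δ) = _
  rw [add_zero, zero_add]

theorem mem_var {Γ ω} (v : Var Γ ω) (γ : Env ρ Γ) (s : St ρ ω) :
    s ∈ interp ρ (.var v) γ ↔ γ = oneAt ρ v s := Iff.rfl

theorem mem_app {Γ ω ω'} (t : Tm Γ (.arrow ω ω')) (u : Tm Γ ω) (γ : Env ρ Γ) (s : St ρ ω') :
    s ∈ interp ρ (.app t u) γ ↔ ∃ (γ₀ : Env ρ Γ) (L : List (Env ρ Γ × St ρ ω)),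
      (∀ p ∈ L, p.2 ∈ interp ρ u p.1) ∧ γ = γ₀ + (L.map Prod.fst).sum ∧
      ((↑(L.map Prod.snd) : Multiset _), s) ∈ interp ρ t γ₀ := by
  simp only [interp, Set.mem_setOf_eq, add_eq, envSum_eq]

theorem mem_lam {Γ ω ω'} (t : Tm (ω :: Γ) ω') (γ : Env ρ Γ) (s : St ρ (.arrow ω ω')) :
    s ∈ interp ρ (.lam t) γ ↔ s.2 ∈ interp ρ t (s.1, γ) := Iff.rfl

theorem listChoice {α β : Type} {P : α → β → Prop} :
    ∀ (L : List α), (∀ a ∈ L, ∃ b, P a b) →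
      ∃ L' : List (α × β), L'.map Prod.fst = L ∧ ∀ p ∈ L', P p.1 p.2
  | [], _ => ⟨[], rfl, by simp⟩
  | a :: L, h => by
    obtain ⟨b, hb⟩ := h a (by simp)
    obtain ⟨L', h1, h2⟩ := listChoice L (fun a ha => h a (by simp [ha]))
    exact ⟨(a, b) :: L', by simp [h1], by
      rintro p hp
      rcases List.mem_cons.mp hp with h | h
      · rw [h]; exact hb
      · exact h2 p h⟩

theorem multisetChoice {α β : Type} {P : α → β → Prop} (M : Multiset α)
    (h : ∀ a ∈ M, ∃ b, P a b) :
    ∃ M' : Multiset (α × β), M'.map Prod.fst = M ∧ ∀ p ∈ M', P p.1 p.2 := by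
  induction M using Multiset.induction with
  | empty => exact ⟨0, rfl, by simp⟩
  | cons a M ih =>
    obtain ⟨b, hb⟩ := h a (by simp)
    obtain ⟨M', h1, h2⟩ := ih (fun a ha => h a (by simp [ha]))
    exact ⟨(a, b) ::ₘ M', by simp [h1], by
      rintro p hp
      rcases Multiset.mem_cons.mp hp with h | h
      · rw [h]; exact hb
      · exact h2 p h⟩

theorem interp_rename {Γ : List Ty} {ω : Ty} (t : Tm Γ ω) :
    ∀ {Δ : List Ty} (r : Ren Γ Δ) (γ : Env ρ Δ) (s : St ρ ω),
      s ∈ interp ρ (t.rename r) γ ↔ ∃ δ, γ = renEnv r δ ∧ s ∈ interp ρ t δ := by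
  induction t with
  | var v =>
    intro Δ r γ s
    show s ∈ interp ρ (.var (r _ v)) γ ↔ _
    rw [mem_var]
    constructor
    · intro h
      exact ⟨oneAt ρ v s, by rw [h, renEnv_oneAt], rfl⟩
    · rintro ⟨δ, hγ, hδ⟩
      rw [mem_var] at hδ
      rw [hγ, hδ, renEnv_oneAt]
  | app t u iht ihu =>
    intro Δ r γ s
    show s ∈ interp ρ (.app (t.rename r) (u.rename r)) γ ↔ _
    rw [mem_app]
    constructor
    · rintro ⟨γ₀, L, hL, hγ, hts⟩
      obtain ⟨L', hmap, hP⟩ := listChoice (P := fun p δ => p.1 = renEnv r δ ∧ p.2 ∈ interp ρ u δ)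
        L (fun p hp => (ihu r p.1 p.2).mp (hL p hp))
      obtain ⟨δ₀, hγ₀, ht⟩ := (iht r γ₀ _).mp hts
      refine ⟨δ₀ + ((L'.map (fun q => (q.2, q.1.2))).map Prod.fst).sum, ?_, ?_⟩
      · rw [renEnv_add, renEnv_listSum, ← hγ₀, hγ]
        rw [← hmap, List.map_map, List.map_map, List.map_map]
        exact congrArg (γ₀ + ·) (congrArg List.sum (List.map_congr_left fun q hq =>
          show q.1.1 = renEnv r q.2 from (hP q hq).1))
      · rw [mem_app]
        refine ⟨δ₀, L'.map (fun q => (q.2, q.1.2)), ?_, rfl, ?_⟩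
        · intro p hp
          obtain ⟨q, hq, rfl⟩ := List.mem_map.mp hp
          exact (hP q hq).2
        · rw [List.map_map]
          have : (L'.map (Prod.snd ∘ fun q => (q.2, q.1.2))) = L.map Prod.snd := by
            rw [← hmap, List.map_map]; rfl
          rw [this]
          exact ht
    · rintro ⟨δ, hγ, hs⟩
      rw [mem_app] at hs
      obtain ⟨δ₀, L, hL, hδ, ht⟩ := hs
      refine ⟨renEnv r δ₀, L.map (fun p => (renEnv r p.1, p.2)), ?_, ?_, ?_⟩
      · intro p hp
        obtain ⟨q, hq, rfl⟩ := List.mem_map.mp hp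
        exact (ihu r _ _).mpr ⟨q.1, rfl, hL q hq⟩
      · rw [hγ, hδ, renEnv_add, renEnv_listSum, List.map_map, List.map_map]; rfl
      · rw [List.map_map]
        refine (iht r _ _).mpr ⟨δ₀, rfl, ?_⟩
        have : (L.map (Prod.snd ∘ fun p => (renEnv r p.1, p.2))) = L.map Prod.snd := rfl
        rw [this]
        exact ht
  | lam t iht =>
    intro Δ r γ s
    show s ∈ interp ρ (.lam (t.rename (Ren.lift r))) γ ↔ _
    rw [mem_lam]
    rw [iht (Ren.lift r) (s.1, γ) s.2]
    constructor
    · rintro ⟨δ', hγ, hs⟩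
      have hδ' : ((s.1, γ) : Env ρ (_ :: Δ)) = (δ'.1, renEnv r δ'.2) := by
        erw [hγ, ← renEnv_lift r δ'.1 δ'.2, Prod.mk.eta]
      have h1 : s.1 = δ'.1 := congrArg Prod.fst hδ'
      have h2 : γ = renEnv r δ'.2 := congrArg Prod.snd hδ'
      refine ⟨δ'.2, h2, ?_⟩
      rw [mem_lam]
      show s.2 ∈ interp ρ t ((s.1 : Multiset _), δ'.2)
      erw [h1, Prod.mk.eta]
      exact hs
    · rintro ⟨δ, hγ, hs⟩
      rw [mem_lam] at hs
      exact ⟨(s.1, δ), by rw [renEnv_lift, hγ], hs⟩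
/-- `SubEnv σ δ γ` : the environment `γ` is a valid decomposition realizing `δ`
through the substitution `σ`. -/
def SubEnv : {Γ Δ : List Ty} → Subst Γ Δ → Env ρ Γ → Env ρ Δ → Prop
  | [], _, _, _, γ => γ = 0
  | ω :: Γ, Δ, σ, δ, γ => ∃ M : Multiset (Env ρ Δ × St ρ ω),
      M.map Prod.snd = δ.1 ∧ (∀ p ∈ M, p.2 ∈ interp ρ (σ _ .vz) p.1) ∧
      ∃ γ', SubEnv (fun _ v => σ _ (.vs v)) δ.2 γ' ∧ γ = (M.map Prod.fst).sum + γ'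

theorem SubEnv_nil {Δ} (σ : Subst [] Δ) (δ : Env ρ []) (γ : Env ρ Δ) :
    SubEnv σ δ γ ↔ γ = 0 := Iff.rfl

theorem SubEnv_cons {ω Γ Δ} (σ : Subst (ω :: Γ) Δ) (δ : Env ρ (ω :: Γ)) (γ : Env ρ Δ) :
    SubEnv σ δ γ ↔ ∃ M : Multiset (Env ρ Δ × St ρ ω),
      M.map Prod.snd = δ.1 ∧ (∀ p ∈ M, p.2 ∈ interp ρ (σ _ .vz) p.1) ∧
      ∃ γ', SubEnv (fun _ v => σ _ (.vs v)) δ.2 γ' ∧ γ = (M.map Prod.fst).sum + γ' := Iff.rfl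

theorem renEnv_multisetSum {Γ Δ : List Ty} (r : Ren Γ Δ) (M : Multiset (Env ρ Γ)) :
    renEnv r M.sum = (M.map (renEnv r)).sum := by
  induction M using Multiset.induction with
  | empty => simpa using renEnv_zero r
  | cons a M ih => rw [Multiset.sum_cons, renEnv_add, ih, Multiset.map_cons, Multiset.sum_cons]

theorem SubEnv_zero : {Γ Δ : List Ty} → (σ : Subst Γ Δ) → (γ : Env ρ Δ) →
    (SubEnv σ 0 γ ↔ γ = 0)
  | [], _, σ, γ => Iff.rfl
  | ω :: Γ, Δ, σ, γ => by
    rw [SubEnv_cons]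
    constructor
    · rintro ⟨M, hsnd, _, γ', hγ', rfl⟩
      have h1 : (0 : Env ρ (ω :: Γ)).1 = 0 := rfl
      rw [h1, Multiset.map_eq_zero] at hsnd
      have h2 : (0 : Env ρ (ω :: Γ)).2 = 0 := rfl
      erw [h2, SubEnv_zero _ γ'] at hγ'
      rw [hsnd, hγ', Multiset.map_zero, Multiset.sum_zero, add_zero]
    · rintro rfl
      exact ⟨0, rfl, by simp, 0, (SubEnv_zero _ 0).mpr rfl, by simp⟩

theorem SubEnv_add : {Γ Δ : List Ty} → (σ : Subst Γ Δ) → {δ₁ δ₂ : Env ρ Γ} →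
    {γ₁ γ₂ : Env ρ Δ} → SubEnv σ δ₁ γ₁ → SubEnv σ δ₂ γ₂ → SubEnv σ (δ₁ + δ₂) (γ₁ + γ₂)
  | [], _, σ, _, _, _, _, h₁, h₂ => by
    rw [SubEnv_nil] at *
    rw [h₁, h₂, add_zero]
  | ω :: Γ, Δ, σ, δ₁, δ₂, γ₁, γ₂, h₁, h₂ => by
    rw [SubEnv_cons] at h₁ h₂ ⊢
    obtain ⟨M₁, hs₁, hm₁, γ₁', hg₁, rfl⟩ := h₁
    obtain ⟨M₂, hs₂, hm₂, γ₂', hg₂, rfl⟩ := h₂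
    refine ⟨M₁ + M₂, ?_, ?_, γ₁' + γ₂', SubEnv_add _ hg₁ hg₂, ?_⟩
    · rw [Multiset.map_add, hs₁, hs₂]; rfl
    · intro p hp
      rcases Multiset.mem_add.mp hp with h | h
      · exact hm₁ p h
      · exact hm₂ p h
    · rw [Multiset.map_add, Multiset.sum_add, add_add_add_comm]

theorem multiset_map_split {α β : Type} (f : α → β) (μ₁ : Multiset β) :
    ∀ (μ₂ : Multiset β) (M : Multiset α), M.map f = μ₁ + μ₂ →
      ∃ M₁ M₂, M = M₁ + M₂ ∧ M₁.map f = μ₁ ∧ M₂.map f = μ₂ := by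
  induction μ₁ using Multiset.induction with
  | empty => exact fun μ₂ M h => ⟨0, M, by simp, by simp, by simpa using h⟩
  | cons a μ₁ ih =>
    intro μ₂ M h
    rw [Multiset.cons_add] at h
    have ha : a ∈ M.map f := by rw [h]; exact Multiset.mem_cons_self _ _
    obtain ⟨x, hx, hfx⟩ := Multiset.mem_map.mp ha
    obtain ⟨M', rfl⟩ := Multiset.exists_cons_of_mem hx
    rw [Multiset.map_cons, hfx] at h
    have h' : M'.map f = μ₁ + μ₂ := (Multiset.cons_inj_right a).mp h
    obtain ⟨M₁, M₂, rfl, hM₁, hM₂⟩ := ih μ₂ M' h'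
    exact ⟨x ::ₘ M₁, M₂, by rw [Multiset.cons_add], by rw [Multiset.map_cons, hfx, hM₁], hM₂⟩

theorem SubEnv_split : {Γ Δ : List Ty} → (σ : Subst Γ Δ) → (δ₁ δ₂ : Env ρ Γ) →
    (γ : Env ρ Δ) → SubEnv σ (δ₁ + δ₂) γ →
    ∃ γ₁ γ₂, SubEnv σ δ₁ γ₁ ∧ SubEnv σ δ₂ γ₂ ∧ γ = γ₁ + γ₂
  | [], _, σ, _, _, γ, h => ⟨0, 0, rfl, rfl, by rw [(SubEnv_nil σ _ γ).mp h, add_zero]⟩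
  | ω :: Γ, Δ, σ, δ₁, δ₂, γ, h => by
    rw [SubEnv_cons] at h
    obtain ⟨M, hsnd, hm, γ', hγ', rfl⟩ := h
    have h1 : (δ₁ + δ₂ : Env ρ (ω :: Γ)).1 = δ₁.1 + δ₂.1 := rfl
    rw [h1] at hsnd
    obtain ⟨M₁, M₂, rfl, hM₁, hM₂⟩ := multiset_map_split Prod.snd δ₁.1 δ₂.1 M hsnd
    have h2 : (δ₁ + δ₂ : Env ρ (ω :: Γ)).2 = δ₁.2 + δ₂.2 := rfl
    rw [h2] at hγ'
    obtain ⟨γ₁', γ₂', hg₁, hg₂, rfl⟩ := SubEnv_split _ δ₁.2 δ₂.2 γ' hγ'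
    refine ⟨(M₁.map Prod.fst).sum + γ₁', (M₂.map Prod.fst).sum + γ₂', ?_, ?_, ?_⟩
    · exact (SubEnv_cons σ δ₁ _).mpr
        ⟨M₁, hM₁, fun p hp => hm p (Multiset.mem_add.mpr (Or.inl hp)), γ₁', hg₁, rfl⟩
    · exact (SubEnv_cons σ δ₂ _).mpr
        ⟨M₂, hM₂, fun p hp => hm p (Multiset.mem_add.mpr (Or.inr hp)), γ₂', hg₂, rfl⟩
    · rw [Multiset.map_add, Multiset.sum_add, add_add_add_comm]

theorem SubEnv_listSum {Γ Δ : List Ty} (σ : Subst Γ Δ) (L : List (Env ρ Γ × Env ρ Δ))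
    (h : ∀ p ∈ L, SubEnv σ p.1 p.2) :
    SubEnv σ (L.map Prod.fst).sum (L.map Prod.snd).sum := by
  induction L with
  | nil => simpa using (SubEnv_zero σ 0).mpr rfl
  | cons a L ih =>
    simp only [List.map_cons, List.sum_cons]
    exact SubEnv_add σ (h a (by simp)) (ih (fun p hp => h p (by simp [hp])))

theorem SubEnv_listSplit {Γ Δ : List Ty} (σ : Subst Γ Δ) :
    ∀ (Ld : List (Env ρ Γ)) (γ : Env ρ Δ), SubEnv σ Ld.sum γ →
      ∃ Lg : List (Env ρ Δ), Lg.sum = γ ∧ List.Forall₂ (SubEnv σ) Ld Lg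
  | [], γ, h => ⟨[], by
      simp only [List.sum_nil] at h
      rw [List.sum_nil, (SubEnv_zero σ γ).mp h], List.Forall₂.nil⟩
  | a :: Ld, γ, h => by
    rw [List.sum_cons] at h
    obtain ⟨γ₁, γ₂, h₁, h₂, rfl⟩ := SubEnv_split σ a Ld.sum γ h
    obtain ⟨Lg, rfl, hf⟩ := SubEnv_listSplit σ Ld γ₂ h₂
    exact ⟨γ₁ :: Lg, by rw [List.sum_cons], List.Forall₂.cons h₁ hf⟩

theorem SubEnv_oneAt : {Γ Δ : List Ty} → {ω : Ty} → (σ : Subst Γ Δ) → (v : Var Γ ω) →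
    (s : St ρ ω) → (γ : Env ρ Δ) → (SubEnv σ (oneAt ρ v s) γ ↔ s ∈ interp ρ (σ _ v) γ)
  | _ :: Γ, Δ, ω, σ, .vz, s, γ => by
    rw [SubEnv_cons]
    have hfst : (oneAt ρ (.vz : Var (ω :: Γ) ω) s).1 = {s} := congrArg Prod.fst (oneAt_vz s)
    have hsnd0 : (oneAt ρ (.vz : Var (ω :: Γ) ω) s).2 = 0 := congrArg Prod.snd (oneAt_vz s)
    constructor
    · rintro ⟨M, hsnd, hm, γ', hγ', rfl⟩
      rw [hfst] at hsnd
      have hcard : Multiset.card M = 1 := by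
        have := congrArg Multiset.card hsnd
        simpa using this
      obtain ⟨p, rfl⟩ := Multiset.card_eq_one.mp hcard
      rw [Multiset.map_singleton, Multiset.singleton_inj] at hsnd
      rw [hsnd0] at hγ'
      rw [(SubEnv_zero _ γ').mp hγ', Multiset.map_singleton, Multiset.sum_singleton, add_zero]
      rw [← hsnd]
      exact hm p (Multiset.mem_singleton_self p)
    · intro h
      refine ⟨{(γ, s)}, by rw [hfst, Multiset.map_singleton], ?_, 0, ?_, ?_⟩
      · intro p hp
        rw [Multiset.mem_singleton.mp hp]
        exact h
      · rw [hsnd0]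
        exact (SubEnv_zero _ 0).mpr rfl
      · rw [Multiset.map_singleton, Multiset.sum_singleton, add_zero]
  | ω₀ :: Γ, Δ, ω, σ, .vs v, s, γ => by
    rw [SubEnv_cons]
    have hfst : (oneAt ρ (.vs v : Var (ω₀ :: Γ) ω) s).1 = 0 := rfl
    have hsnd : (oneAt ρ (.vs v : Var (ω₀ :: Γ) ω) s).2 = oneAt ρ v s := rfl
    constructor
    · rintro ⟨M, hs, hm, γ', hγ', rfl⟩
      rw [hfst, Multiset.map_eq_zero] at hs
      rw [hs, Multiset.map_zero, Multiset.sum_zero, zero_add]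
      rw [hsnd] at hγ'
      exact (SubEnv_oneAt _ v s γ').mp hγ'
    · intro h
      refine ⟨0, by rw [hfst, Multiset.map_zero], by simp, γ, ?_, by simp⟩
      rw [hsnd]
      exact (SubEnv_oneAt _ v s γ).mpr h

theorem SubEnv_ren : {Γ Δ : List Ty} → (r : Ren Γ Δ) → (δ : Env ρ Γ) → (γ : Env ρ Δ) →
    (SubEnv (fun _ v => .var (r _ v)) δ γ ↔ γ = renEnv r δ)
  | [], Δ, r, δ, γ => Iff.rfl
  | ω :: Γ, Δ, r, δ, γ => by
    erw [SubEnv_cons]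
    show _ ↔ γ = (δ.1.map (fun s => oneAt ρ (r _ .vz) s)).sum + renEnv (fun _ v => r _ (.vs v)) δ.2
    constructor
    · rintro ⟨M, hsnd, hm, γ', hγ', rfl⟩
      rw [(SubEnv_ren (fun _ v => r _ (.vs v)) δ.2 γ').mp hγ']
      congr 1
      have : M.map Prod.fst = M.map (fun p => oneAt ρ (r _ .vz) p.2) :=
        Multiset.map_congr rfl (fun p hp => (mem_var _ _ _).mp (hm p hp))
      rw [this, show (fun p : Env ρ Δ × St ρ ω => oneAt ρ (r _ .vz) p.2)
        = ((fun s => oneAt ρ (r _ .vz) s) ∘ Prod.snd) from rfl, ← Multiset.map_map, hsnd]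
    · rintro rfl
      refine ⟨δ.1.map (fun s => (oneAt ρ (r _ .vz) s, s)), ?_, ?_,
        renEnv (fun _ v => r _ (.vs v)) δ.2,
        (SubEnv_ren (fun _ v => r _ (.vs v)) δ.2 _).mpr rfl, ?_⟩
      · rw [Multiset.map_map]
        exact Multiset.map_id δ.1
      · intro p hp
        obtain ⟨s, _, rfl⟩ := Multiset.mem_map.mp hp
        exact (mem_var _ _ _).mpr rfl
      · rw [Multiset.map_map]
        rfl

theorem SubEnv_renSubst : {Γ : List Ty} → {Δ Δ' : List Ty} → (σ : Subst Γ Δ) →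
    (r : Ren Δ Δ') → (δ : Env ρ Γ) → (γ : Env ρ Δ') →
    (SubEnv (fun ω v => (σ ω v).rename r) δ γ ↔
      ∃ γ₀, SubEnv σ δ γ₀ ∧ γ = renEnv r γ₀)
  | [], Δ, Δ', σ, r, δ, γ => by
    erw [SubEnv_nil]
    constructor
    · rintro rfl
      exact ⟨0, rfl, (renEnv_zero r).symm⟩
    · rintro ⟨γ₀, hγ₀, rfl⟩
      rw [(SubEnv_nil σ δ γ₀).mp hγ₀, renEnv_zero]
  | ω :: Γ, Δ, Δ', σ, r, δ, γ => by
    erw [SubEnv_cons]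
    constructor
    · rintro ⟨M', hsnd, hm, γ', hγ', rfl⟩
      obtain ⟨M'', hfst, hP⟩ := multisetChoice
        (P := fun (p : Env ρ Δ' × St ρ ω) (q : Env ρ Δ) =>
          p.1 = renEnv r q ∧ p.2 ∈ interp ρ (σ _ .vz) q)
        M' (fun p hp => (interp_rename (σ _ .vz) r p.1 p.2).mp (hm p hp))
      obtain ⟨γ₀', hγ₀', rfl⟩ :=
        (SubEnv_renSubst (fun ω v => σ ω (.vs v)) r δ.2 γ').mp hγ'
      refine ⟨(M''.map (fun x => (x.2, x.1.2)) |>.map Prod.fst).sum + γ₀', ?_, ?_⟩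
      · rw [SubEnv_cons]
        refine ⟨M''.map (fun x => (x.2, x.1.2)), ?_, ?_, γ₀', hγ₀', rfl⟩
        · rw [Multiset.map_map, show (Prod.snd ∘ fun x : (Env ρ Δ' × St ρ ω) × Env ρ Δ =>
            (x.2, x.1.2)) = (Prod.snd ∘ Prod.fst) from rfl, ← Multiset.map_map, hfst, hsnd]
        · intro p hp
          obtain ⟨x, hx, rfl⟩ := Multiset.mem_map.mp hp
          exact (hP x hx).2
      · rw [renEnv_add, renEnv_multisetSum]
        congr 1
        rw [Multiset.map_map, Multiset.map_map]
        rw [show ((renEnv r ∘ Prod.fst) ∘ fun x : (Env ρ Δ' × St ρ ω) × Env ρ Δ =>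
          (x.2, x.1.2)) = (fun x => renEnv r x.2) from rfl]
        rw [show M'.map Prod.fst = (M''.map Prod.fst).map Prod.fst from by rw [hfst]]
        rw [Multiset.map_map]
        exact congrArg Multiset.sum (Multiset.map_congr rfl
          (fun x hx => show x.1.1 = renEnv r x.2 from (hP x hx).1))
    · rintro ⟨γ₀, hγ₀, rfl⟩
      rw [SubEnv_cons] at hγ₀
      obtain ⟨M, hsnd, hm, γ', hγ', rfl⟩ := hγ₀
      refine ⟨M.map (fun p => (renEnv r p.1, p.2)), ?_, ?_, renEnv r γ',
        (SubEnv_renSubst (fun ω v => σ ω (.vs v)) r δ.2 _).mpr ⟨γ', hγ', rfl⟩, ?_⟩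
      · rw [Multiset.map_map]
        exact hsnd
      · intro p hp
        obtain ⟨q, hq, rfl⟩ := Multiset.mem_map.mp hp
        exact (interp_rename (σ _ .vz) r _ _).mpr ⟨q.1, rfl, hm q hq⟩
      · rw [renEnv_add, renEnv_multisetSum, Multiset.map_map, Multiset.map_map]
        rfl

theorem SubEnv_lift {ω₀ Γ Δ} (σ : Subst Γ Δ) (ν : Multiset (St ρ ω₀)) (δ : Env ρ Γ)
    (γf : Env ρ (ω₀ :: Δ)) :
    SubEnv (Subst.lift σ) ((ν, δ) : Env ρ (ω₀ :: Γ)) γf ↔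
      ∃ γ₀, SubEnv σ δ γ₀ ∧ γf = ((ν, γ₀) : Env ρ (ω₀ :: Δ)) := by
  have hre : ∀ γ₀ : Env ρ Δ,
      renEnv (fun _ w => (Var.vs w : Var (ω₀ :: Δ) _)) γ₀ = ((0 : Multiset (St ρ ω₀)), γ₀) := by
    intro γ₀
    have := renEnv_vs (ρ := ρ) (ω' := ω₀) (fun _ v => v) γ₀
    rw [renEnv_id] at this
    exact this
  erw [SubEnv_cons]
  constructor
  · rintro ⟨M, hsnd, hm, γ', hγ', rfl⟩
    obtain ⟨γ₀, hγ₀, hγ'eq⟩ :=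
      (SubEnv_renSubst σ (fun _ w => (Var.vs w : Var (ω₀ :: Δ) _)) δ γ').mp hγ'
    refine ⟨γ₀, hγ₀, ?_⟩
    have hM : M.map Prod.fst = M.map (fun p => oneAt ρ (.vz : Var (ω₀ :: Δ) ω₀) p.2) :=
      Multiset.map_congr rfl (fun p hp => (mem_var _ _ _).mp (hm p hp))
    rw [hγ'eq, hre, hM, show (fun p : Env ρ (ω₀ :: Δ) × St ρ ω₀ =>
      oneAt ρ (.vz : Var (ω₀ :: Δ) ω₀) p.2)
      = ((fun s => oneAt ρ (.vz : Var (ω₀ :: Δ) ω₀) s) ∘ Prod.snd) from rfl,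
      ← Multiset.map_map, hsnd]
    show ((ν.map _).sum + _ : Env ρ (ω₀ :: Δ)) = _
    erw [manyAt_vz, env_add_cons]
    show ((ν + 0 : Multiset _), 0 + γ₀) = _
    rw [add_zero, zero_add]
  · rintro ⟨γ₀, hγ₀, rfl⟩
    have h2 : SubEnv (fun (ω : Ty) (v : Var Γ ω) =>
        (σ ω v).rename (fun _ w => (Var.vs w : Var (ω₀ :: Δ) _))) δ
        (((0 : Multiset (St ρ ω₀)), γ₀) : Env ρ (ω₀ :: Δ)) :=
      (SubEnv_renSubst σ _ δ _).mpr ⟨γ₀, hγ₀, (hre γ₀).symm⟩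
    refine ⟨ν.map (fun s => (oneAt ρ (.vz : Var (ω₀ :: Δ) ω₀) s, s)), ?_, ?_,
      ((0 : Multiset _), γ₀), h2, ?_⟩
    · rw [Multiset.map_map]
      exact Multiset.map_id ν
    · intro p hp
      obtain ⟨s, _, rfl⟩ := Multiset.mem_map.mp hp
      exact (mem_var _ _ _).mpr rfl
    · erw [Multiset.map_map, show (Prod.fst ∘ fun s : St ρ ω₀ =>
        (oneAt ρ (.vz : Var (ω₀ :: Δ) ω₀) s, s)) = (fun s => oneAt ρ (.vz : Var (ω₀ :: Δ) ω₀) s)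
        from rfl, manyAt_vz, env_add_cons]
      show _ = ((ν + 0 : Multiset _), 0 + γ₀)
      rw [add_zero, zero_add]
theorem zip_helper {Γ Δ : List Ty} {ω : Ty} (σ : Subst Γ Δ) (u : Tm Γ ω)
    (ihu : ∀ (g : Env ρ Δ) (st : St ρ ω),
      st ∈ interp ρ (u.subst σ) g ↔ ∃ δ, SubEnv σ δ g ∧ st ∈ interp ρ u δ) :
    ∀ (L : List (Env ρ Γ × St ρ ω)) (Lg : List (Env ρ Δ)),
      List.Forall₂ (SubEnv σ) (L.map Prod.fst) Lg →
      (∀ p ∈ L, p.2 ∈ interp ρ u p.1) →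
      ∃ L' : List (Env ρ Δ × St ρ ω),
        (∀ p ∈ L', p.2 ∈ interp ρ (u.subst σ) p.1) ∧
        L'.map Prod.fst = Lg ∧ L'.map Prod.snd = L.map Prod.snd
  | [], Lg, hf, _ => by
    cases hf
    exact ⟨[], by simp, rfl, rfl⟩
  | p :: L, Lg, hf, hmem => by
    rw [List.map_cons] at hf
    cases hf with
    | cons hpg htail =>
      obtain ⟨L', h1, h2, h3⟩ := zip_helper σ u ihu L _ htail
        (fun q hq => hmem q (by simp [hq]))
      refine ⟨(_, p.2) :: L', ?_, by rw [List.map_cons, h2], by rw [List.map_cons, h3]; rfl⟩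
      intro q hq
      rcases List.mem_cons.mp hq with h | h
      · rw [h]
        exact (ihu _ p.2).mpr ⟨p.1, hpg, hmem p (by simp)⟩
      · exact h1 q h

theorem interp_subst {Γ : List Ty} {ω : Ty} (t : Tm Γ ω) :
    ∀ {Δ : List Ty} (σ : Subst Γ Δ) (γ : Env ρ Δ) (s : St ρ ω),
      s ∈ interp ρ (t.subst σ) γ ↔ ∃ δ, SubEnv σ δ γ ∧ s ∈ interp ρ t δ := by
  induction t with
  | var v =>
    intro Δ σ γ s
    show s ∈ interp ρ (σ _ v) γ ↔ _
    rw [← SubEnv_oneAt σ v s γ]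
    constructor
    · exact fun h => ⟨oneAt ρ v s, h, rfl⟩
    · rintro ⟨δ, hδ, hmem⟩
      rw [mem_var] at hmem
      rw [hmem] at hδ
      exact hδ
  | app t u iht ihu =>
    intro Δ σ γ s
    show s ∈ interp ρ (.app (t.subst σ) (u.subst σ)) γ ↔ _
    rw [mem_app]
    constructor
    · rintro ⟨γ₀, L, hL, rfl, hts⟩
      obtain ⟨δ₀, hδ₀, ht⟩ := (iht σ γ₀ _).mp hts
      obtain ⟨L', hmap, hP⟩ := listChoice
        (P := fun p q => SubEnv σ q p.1 ∧ p.2 ∈ interp ρ u q)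
        L (fun p hp => (ihu σ p.1 p.2).mp (hL p hp))
      have hsub : SubEnv σ ((L'.map (fun q => (q.2, q.1.1))).map Prod.fst).sum
          ((L'.map (fun q => (q.2, q.1.1))).map Prod.snd).sum :=
        SubEnv_listSum σ _ (by
          intro q hq
          obtain ⟨x, hx, rfl⟩ := List.mem_map.mp hq
          exact (hP x hx).1)
      refine ⟨δ₀ + (L'.map (fun q => (q.2, q.1.2)) |>.map Prod.fst).sum, ?_, ?_⟩
      · have heq1 : ((L'.map (fun q => (q.2, q.1.1))).map Prod.snd) = L.map Prod.fst := by
          rw [List.map_map, ← hmap, List.map_map]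
          rfl
        have heq2 : ((L'.map (fun q => (q.2, q.1.1))).map Prod.fst)
            = ((L'.map (fun q => (q.2, q.1.2))).map Prod.fst) := by
          rw [List.map_map, List.map_map]
          rfl
        rw [heq1, heq2] at hsub
        exact SubEnv_add σ hδ₀ hsub
      · rw [mem_app]
        refine ⟨δ₀, L'.map (fun q => (q.2, q.1.2)), ?_, rfl, ?_⟩
        · intro p hp
          obtain ⟨x, hx, rfl⟩ := List.mem_map.mp hp
          exact (hP x hx).2
        · have : (L'.map (fun q => (q.2, q.1.2))).map Prod.snd = L.map Prod.snd := by
            rw [List.map_map, ← hmap, List.map_map]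
            rfl
          rw [this]
          exact ht
    · rintro ⟨δ, hδ, hs⟩
      rw [mem_app] at hs
      obtain ⟨δ₀, L, hL, rfl, ht⟩ := hs
      obtain ⟨γ₀, γ₁, h₁, h₂, rfl⟩ := SubEnv_split σ δ₀ _ γ hδ
      obtain ⟨Lg, rfl, hf⟩ := SubEnv_listSplit σ (L.map Prod.fst) γ₁ h₂
      obtain ⟨L', hmem', hfst', hsnd'⟩ := zip_helper σ u (fun g st => ihu σ g st) L Lg hf hL
      refine ⟨γ₀, L', hmem', by rw [hfst'], ?_⟩
      rw [hsnd']
      exact (iht σ γ₀ _).mpr ⟨δ₀, h₁, ht⟩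
  | lam t iht =>
    intro Δ σ γ s
    show s ∈ interp ρ (.lam (t.subst (Subst.lift σ))) γ ↔ _
    rw [mem_lam, iht (Subst.lift σ) (s.1, γ) s.2]
    constructor
    · rintro ⟨δ', hδ', hs⟩
      obtain ⟨γ₀, hγ₀, heq⟩ := (SubEnv_lift σ δ'.1 δ'.2 (s.1, γ)).mp
        (by erw [Prod.mk.eta]; exact hδ')
      have h1 : s.1 = δ'.1 := congrArg Prod.fst heq
      have h2 : γ = γ₀ := congrArg Prod.snd heq
      refine ⟨δ'.2, by rw [h2]; exact hγ₀, ?_⟩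
      rw [mem_lam]
      show s.2 ∈ interp ρ t ((s.1 : Multiset _), δ'.2)
      erw [h1, Prod.mk.eta]
      exact hs
    · rintro ⟨δ, hδ, hs⟩
      rw [mem_lam] at hs
      exact ⟨(s.1, δ), (SubEnv_lift σ s.1 δ _).mpr ⟨γ, hδ, rfl⟩, hs⟩

theorem SubEnv_consSubst {Γ : List Ty} {ω : Ty} (u : Tm Γ ω) (δ : Env ρ (ω :: Γ))
    (γ : Env ρ Γ) :
    SubEnv (Subst.cons u) δ γ ↔ ∃ M : Multiset (Env ρ Γ × St ρ ω),
      M.map Prod.snd = δ.1 ∧ (∀ p ∈ M, p.2 ∈ interp ρ u p.1) ∧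
      γ = (M.map Prod.fst).sum + δ.2 := by
  rw [SubEnv_cons]
  constructor
  · rintro ⟨M, h1, h2, γ', hγ', rfl⟩
    have : γ' = renEnv (fun _ v => v) δ.2 :=
      (SubEnv_ren (fun _ v => v) δ.2 γ').mp hγ'
    rw [renEnv_id] at this
    exact ⟨M, h1, h2, by rw [this]⟩
  · rintro ⟨M, h1, h2, rfl⟩
    refine ⟨M, h1, h2, δ.2, ?_, rfl⟩
    have : SubEnv (fun (ω' : Ty) (v : Var Γ ω') => Tm.var ((fun _ w => w) ω' v)) δ.2 δ.2 :=
      (SubEnv_ren (fun _ v => v) δ.2 δ.2).mpr (renEnv_id δ.2).symm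
    exact this
end BetaAux

/-- Invariance of the interpretation under β-reduction:
`[[(λx.t)u]]_γ = [[t[u/x]]]_γ`. -/
theorem beta_invariance (ρ : ℕ → Type) {Γ : List Ty} {ω ω' : Ty}
    (t : Tm (ω :: Γ) ω') (u : Tm Γ ω) (γ : Env ρ Γ) :
    interp ρ (Tm.app (Tm.lam t) u) γ = interp ρ (subst1 t u) γ := by
  ext s
  rw [BetaAux.mem_app, show subst1 t u = t.subst (Subst.cons u) from rfl,
    BetaAux.interp_subst t (Subst.cons u) γ s]
  constructor
  · rintro ⟨γ₀, L, hL, rfl, hts⟩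
    erw [BetaAux.mem_lam] at hts
    refine ⟨((↑(L.map Prod.snd) : Multiset _), γ₀),
      (BetaAux.SubEnv_consSubst u _ _).mpr ⟨(↑L : Multiset _), ?_, ?_, ?_⟩, hts⟩
    · rw [Multiset.map_coe]
    · intro p hp
      exact hL p (by simpa using hp)
    · rw [Multiset.map_coe, Multiset.sum_coe]
      show _ = _ + γ₀
      rw [add_comm]
  · rintro ⟨δ, hδ, hs⟩
    obtain ⟨M, h1, h2, rfl⟩ := (BetaAux.SubEnv_consSubst u δ _).mp hδ
    obtain ⟨l, hl⟩ : ∃ l : List _, (↑l : Multiset _) = M := ⟨M.toList, Multiset.coe_toList M⟩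
    refine ⟨δ.2, l, ?_, ?_, ?_⟩
    · intro p hp
      exact h2 p (by rw [← hl]; exact Multiset.mem_coe.mpr hp)
    · rw [← hl, Multiset.map_coe, Multiset.sum_coe, add_comm]
    · erw [BetaAux.mem_lam]
      show s ∈ interp ρ t ((↑(l.map Prod.snd) : Multiset _), δ.2)
      erw [show (↑(l.map Prod.snd) : Multiset _) = δ.1 from by rw [← h1, ← hl, Multiset.map_coe],
        Prod.mk.eta]
      exact hs
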